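/- If Breaker has a winning strategy in the Maker-Breaker game of arboricity on a finite graph G with k+1 colours, then Breaker also has a winning strategy on G with k colours. -/

import Mathlib

/-!
The Maker-Breaker game of arboricity on a finite simple graph `G` with `k` colours:
Maker and Breaker alternately colour edges (Maker first, represented by turn `true`),
so that every colour class is a forest.  Breaker wins when some uncoloured edge cannot
receive any colour without creating a monochromatic cycle.
-/

/-- The spanning subgraph of `G` consisting of those edges given colour `c`
by the partial edge-colouring `f`. -/
def colourSub {V : Type} (G : SimpleGraph V) {k : ℕ} (f : Sym2 V → Option (Fin k))
    (c : Fin k) : SimpleGraph V where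
  Adj u v := G.Adj u v ∧ f s(u, v) = some c
  symm := ⟨fun u v h => ⟨h.1.symm, by rw [Sym2.eq_swap]; exact h.2⟩⟩
  loopless := ⟨fun u h => G.loopless.irrefl u h.1⟩

/-- Assigning colour `c` to the uncoloured edge `xy` is a legal move: it creates no
monochromatic cycle, i.e. `x` and `y` are not already joined by colour-`c` edges. -/
def ArbLegal {V : Type} (G : SimpleGraph V) {k : ℕ} (f : Sym2 V → Option (Fin k))
    (x y : V) (c : Fin k) : Prop :=
  G.Adj x y ∧ f s(x, y) = none ∧ ¬ (colourSub G f c).Reachable x y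

/-- Some uncoloured edge cannot be given any colour: Breaker's winning condition. -/
def ArbStuck {V : Type} (G : SimpleGraph V) {k : ℕ} (f : Sym2 V → Option (Fin k)) : Prop :=
  ∃ x y, G.Adj x y ∧ f s(x, y) = none ∧ ∀ c, (colourSub G f c).Reachable x y

/-- `ArbBreakerWins G k f t` : Breaker has a winning strategy in the game of arboricity
with `k` colours from the position with partial colouring `f`, where `t = true` means it
is Maker's turn and `t = false` means it is Breaker's turn. -/
inductive ArbBreakerWins {V : Type} [DecidableEq V] (G : SimpleGraph V) (k : ℕ) :
    (Sym2 V → Option (Fin k)) → Bool → Prop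
  | stuck (f : Sym2 V → Option (Fin k)) (t : Bool) (h : ArbStuck G f) :
      ArbBreakerWins G k f t
  | maker (f : Sym2 V → Option (Fin k))
      (hne : ∃ e ∈ G.edgeSet, f e = none)
      (h : ∀ x y c, ArbLegal G f x y c →
        ArbBreakerWins G k (Function.update f s(x, y) (some c)) false) :
      ArbBreakerWins G k f true
  | breaker (f : Sym2 V → Option (Fin k)) (x y : V) (c : Fin k)
      (hc : ArbLegal G f x y c)
      (h : ArbBreakerWins G k (Function.update f s(x, y) (some c)) true) :
      ArbBreakerWins G k f false


section Aux

variable {V : Type} [DecidableEq V]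

lemma colourSub_adj (G : SimpleGraph V) {n : ℕ} (f : Sym2 V → Option (Fin n))
    (c : Fin n) (u v : V) :
    (colourSub G f c).Adj u v ↔ G.Adj u v ∧ f s(u, v) = some c := Iff.rfl

/-- If every edge of `A` joins vertices reachable in `B`, then `A`-reachable implies
`B`-reachable. -/
lemma reach_mono {A B : SimpleGraph V}
    (h : ∀ u v, A.Adj u v → B.Reachable u v) {u v : V} (hr : A.Reachable u v) :
    B.Reachable u v := by
  obtain ⟨w⟩ := hr
  induction w with
  | nil => exact SimpleGraph.Reachable.refl _
  | cons hadj p ih => exact (h _ _ hadj).trans ih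

lemma adj_update (G : SimpleGraph V) {n : ℕ} (f : Sym2 V → Option (Fin n))
    (x y : V) (c d : Fin n) (u v : V) :
    (colourSub G (Function.update f s(x, y) (some c)) d).Adj u v ↔
      ((colourSub G f d).Adj u v ∧ s(u, v) ≠ s(x, y)) ∨
      (G.Adj u v ∧ s(u, v) = s(x, y) ∧ d = c) := by
  rw [colourSub_adj, colourSub_adj]
  by_cases h : s(u, v) = s(x, y)
  · simp [h, Function.update_apply, eq_comm]
  · simp [h, Function.update_apply]

/-- Updating an uncoloured edge only enlarges colour classes. -/
lemma reach_update_of_reach (G : SimpleGraph V) {n : ℕ} (f : Sym2 V → Option (Fin n))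
    {x y : V} (hnone : f s(x, y) = none) (c d : Fin n) {u v : V}
    (hr : (colourSub G f d).Reachable u v) :
    (colourSub G (Function.update f s(x, y) (some c)) d).Reachable u v := by
  refine reach_mono (fun a b hab => SimpleGraph.Adj.reachable ?_) hr
  rw [adj_update]
  left
  refine ⟨hab, fun he => ?_⟩
  rw [colourSub_adj] at hab
  rw [he, hnone] at hab
  exact (Option.some_ne_none _ hab.2.symm).elim

lemma update_none_iff {n m : ℕ} (f : Sym2 V → Option (Fin n)) (g : Sym2 V → Option (Fin m))
    (e₀ : Sym2 V) (c : Fin n) (d : Fin m)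
    (h : ∀ e, f e = none ↔ g e = none) (e : Sym2 V) :
    Function.update f e₀ (some c) e = none ↔ Function.update g e₀ (some d) e = none := by
  by_cases he : e = e₀ <;> simp [he, Function.update_apply, h e]

/-- The key simulation lemma: a Breaker win with `k+1` colours transfers to any
`k`-colour position with the same uncoloured edges whose colour classes have at least
as much connectivity. -/
lemma arb_key {V : Type} [DecidableEq V] (G : SimpleGraph V) (k : ℕ)
    {g : Sym2 V → Option (Fin (k + 1))} {t : Bool}
    (hw : ArbBreakerWins G (k + 1) g t) :
    ∀ f : Sym2 V → Option (Fin k),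
      (∀ e, f e = none ↔ g e = none) →
      (∀ (c : Fin k) (u v : V), (colourSub G g c.castSucc).Reachable u v →
        (colourSub G f c).Reachable u v) →
      ArbBreakerWins G k f t := by
  induction hw with
  | stuck g t hst =>
      intro f h1 h2
      obtain ⟨x, y, hadj, hnone, hall⟩ := hst
      exact .stuck f t ⟨x, y, hadj, (h1 _).mpr hnone, fun c => h2 c x y (hall c.castSucc)⟩
  | maker g hne hmov ih =>
      intro f h1 h2
      refine .maker f ?_ ?_
      · obtain ⟨e, he, hen⟩ := hne
        exact ⟨e, he, (h1 e).mpr hen⟩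
      · intro x y c hleg
        obtain ⟨hadj, hnone, hnr⟩ := hleg
        have hgnone : g s(x, y) = none := (h1 _).mp hnone
        have hleg' : ArbLegal G g x y c.castSucc :=
          ⟨hadj, hgnone, fun hr => hnr (h2 c x y hr)⟩
        refine ih x y c.castSucc hleg' _ (update_none_iff f g _ c c.castSucc h1) ?_
        intro d u v hr
        refine reach_mono (fun a b hab => ?_) hr
        rw [adj_update] at hab
        rcases hab with ⟨hab, _⟩ | ⟨hab, he, hdc⟩
        · exact reach_update_of_reach G f hnone c d (h2 d a b hab.reachable)
        · have hdc' : d = c := Fin.castSucc_injective _ hdc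
          refine SimpleGraph.Adj.reachable ?_
          rw [colourSub_adj, he, hdc', Function.update_self]
          exact ⟨hab, rfl⟩
  | breaker g x y c hc hwin ih =>
      intro f h1 h2
      obtain ⟨hadj, hgnone, hgnr⟩ := hc
      have hfnone : f s(x, y) = none := (h1 _).mpr hgnone
      by_cases hstuck : ∀ c'' : Fin k, (colourSub G f c'').Reachable x y
      · exact .stuck f false ⟨x, y, hadj, hfnone, hstuck⟩
      · push_neg at hstuck
        -- choose the real colour c'' cleverly
        have hchoice : ∃ c'' : Fin k, ¬ (colourSub G f c'').Reachable x y ∧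
            (c''.castSucc = c ∨ ∀ d : Fin k, d.castSucc = c →
              (colourSub G f d).Reachable x y) := by
          by_cases hlast : c = Fin.last k
          · obtain ⟨c'', hc''⟩ := hstuck
            refine ⟨c'', hc'', Or.inr fun d hd => ?_⟩
            exact absurd (hlast ▸ hd) (Fin.castSucc_lt_last d).ne
          · obtain ⟨c₀, hc₀⟩ := Fin.exists_castSucc_eq.mpr hlast
            by_cases hr0 : (colourSub G f c₀).Reachable x y
            · obtain ⟨c'', hc''⟩ := hstuck
              refine ⟨c'', hc'', Or.inr fun d hd => ?_⟩
              have : d = c₀ := Fin.castSucc_injective _ (hd.trans hc₀.symm)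
              exact this ▸ hr0
            · exact ⟨c₀, hr0, Or.inl hc₀⟩
        obtain ⟨c'', hnr, hprop⟩ := hchoice
        refine .breaker f x y c'' ⟨hadj, hfnone, hnr⟩ ?_
        refine ih _ (update_none_iff f g _ c'' c h1) ?_
        intro d u v hr
        refine reach_mono (fun a b hab => ?_) hr
        rw [adj_update] at hab
        rcases hab with ⟨hab, _⟩ | ⟨hab, he, hdc⟩
        · exact reach_update_of_reach G f hfnone c'' d (h2 d a b hab.reachable)
        · -- the newly coloured edge `s(a,b) = s(x,y)` with imagined colour `c = d.castSucc`
          rcases hprop with hcc | hall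
          · have : d = c'' := Fin.castSucc_injective _ (hdc.trans hcc.symm)
            refine SimpleGraph.Adj.reachable ?_
            rw [colourSub_adj, he, this, Function.update_self]
            exact ⟨hab, rfl⟩
          · have hxy : (colourSub G f d).Reachable x y := hall d hdc
            have hab' : (colourSub G f d).Reachable a b := by
              rw [Sym2.eq_iff] at he
              rcases he with ⟨ha, hb⟩ | ⟨ha, hb⟩
              · rw [ha, hb]; exact hxy
              · rw [ha, hb]; exact hxy.symm
            exact reach_update_of_reach G f hfnone c'' d hab'

end Aux

/-- If Breaker has a winning strategy in the game of arboricity on a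
finite graph `G` with `k + 1` colours, then Breaker also has a winning strategy on `G`
with `k` colours. -/
theorem arboricity_breaker_monotone {V : Type} [Fintype V] [DecidableEq V]
    (G : SimpleGraph V) (k : ℕ)
    (h : ArbBreakerWins G (k + 1) (fun _ => none) true) :
    ArbBreakerWins G k (fun _ => none) true := by
  refine arb_key G k h (fun _ => none) (fun e => by simp) ?_
  intro c u v hr
  refine reach_mono (fun a b hab => ?_) hr
  rw [colourSub_adj] at hab
  exact (Option.some_ne_none _ hab.2.symm).elim
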